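/- Suppose the connection matrix C satisfies ∑_j c_{ij} = c for all i, and S(θ, c f(θ,θ)) > 0 for all θ ∈ ℝ. Then the function θ̄ solving θ̄' = S(θ̄, c f(θ̄, θ̄)), extended to the vector θ_i(t) = θ̄(t) for all i, is a solution of the coupled system θ_i' = S(θ_i, ∑_j c_{ij} f(θ_i, θ_j)) for 1 ≤ i ≤ n, and it satisfies θ̄(t+T) = θ̄(t) + 2π with T = ∫₀^{2π} dθ / S(θ, c f(θ,θ)). -/

import Mathlib

open Real

/-- If the row sums of the connection matrix are all `c` and
`S(θ, c f(θ,θ)) > 0`, then the solution `θ̄` of the scalar equation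
`θ̄' = S(θ̄, c f(θ̄,θ̄))` gives a synchronized solution of the coupled system,
and satisfies `θ̄(t+T) = θ̄(t) + 2π` with `T = ∫₀^{2π} dθ / S(θ, c f(θ,θ))`. -/
theorem synchronized_oscillation_coupled_system (n : ℕ)
    (S f : ℝ → ℝ → ℝ)
    (hS : ContDiff ℝ 1 (fun p : ℝ × ℝ => S p.1 p.2))
    (hf : ContDiff ℝ 1 (fun p : ℝ × ℝ => f p.1 p.2))
    (hSper : ∀ x y : ℝ, S (x + 2 * π) y = S x y)
    (hfper1 : ∀ x y : ℝ, f (x + 2 * π) y = f x y)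
    (hfper2 : ∀ x y : ℝ, f x (y + 2 * π) = f x y)
    (C : Matrix (Fin n) (Fin n) ℝ) (c : ℝ)
    (hrow : ∀ i : Fin n, ∑ j, C i j = c)
    (hpos : ∀ θ : ℝ, 0 < S θ (c * f θ θ))
    (θbar : ℝ → ℝ)
    (hθbar : ∀ t : ℝ, HasDerivAt θbar (S (θbar t) (c * f (θbar t) (θbar t))) t) :
    (∀ (i : Fin n) (t : ℝ),
      HasDerivAt θbar (S (θbar t) (∑ j, C i j * f (θbar t) (θbar t))) t) ∧
    (∀ t : ℝ, θbar (t + ∫ θ in (0:ℝ)..(2 * π), 1 / S θ (c * f θ θ))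
        = θbar t + 2 * π) := by
  set g : ℝ → ℝ := fun θ => S θ (c * f θ θ) with hg
  have hgc : Continuous g := by
    have := hS.continuous
    have hfc := hf.continuous
    exact this.comp (continuous_id.prodMk
      ((continuous_const.mul (hfc.comp (continuous_id.prodMk continuous_id)))))
  have hgpos : ∀ θ, 0 < g θ := hpos
  have hGc : Continuous (fun θ => 1 / g θ) :=
    continuous_const.div hgc (fun x => (hgpos x).ne')
  have hgper : Function.Periodic g (2 * π) := by
    intro x
    simp only [hg]
    rw [hfper1, hfper2, hSper]
  have hGper : Function.Periodic (fun θ => 1 / g θ) (2 * π) := fun x => by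
    simp [hgper x]
  set F : ℝ → ℝ := fun x => ∫ θ in (0:ℝ)..x, 1 / g θ with hF
  have hFderiv : ∀ x : ℝ, HasDerivAt F (1 / g x) x := by
    intro x
    exact intervalIntegral.integral_hasDerivAt_right
      (hGc.intervalIntegrable _ _)
      (hGc.stronglyMeasurableAtFilter _ _)
      hGc.continuousAt
  have hFmono : StrictMono F := by
    apply strictMono_of_deriv_pos
    intro x
    rw [(hFderiv x).deriv]
    exact div_pos one_pos (hgpos x)
  set T : ℝ := ∫ θ in (0:ℝ)..(2 * π), 1 / g θ with hT
  have hFshift : ∀ x : ℝ, F (x + 2 * π) = F x + T := by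
    intro x
    have : F (x + 2 * π) = F x + ∫ θ in x..(x + 2 * π), 1 / g θ :=
      (intervalIntegral.integral_add_adjacent_intervals
        (hGc.intervalIntegrable 0 x) (hGc.intervalIntegrable x (x + 2 * π))).symm
    rw [this, hGper.intervalIntegral_add_eq x 0, zero_add, ← hT]
  -- F (θbar t) - t is constant
  have hcomp : ∀ t : ℝ, HasDerivAt (fun t => F (θbar t) - t) 0 t := by
    intro t
    have h1 : HasDerivAt (fun t => F (θbar t)) (1 / g (θbar t) * g (θbar t)) t :=
      (hFderiv (θbar t)).comp t (hθbar t)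
    have h2 : 1 / g (θbar t) * g (θbar t) = 1 := by
      field_simp
      exact div_self (hgpos _).ne'
    rw [h2] at h1
    have h3 := h1.sub (hasDerivAt_id' t)
    rw [sub_self] at h3
    exact h3
  have hconst : ∀ s t : ℝ, F (θbar s) - s = F (θbar t) - t := by
    intro s t
    have : ∀ x, deriv (fun t => F (θbar t) - t) x = 0 := fun x => (hcomp x).deriv
    exact is_const_of_deriv_eq_zero (fun x => (hcomp x).differentiableAt) this s t
  constructor
  · intro i t
    have : (∑ j, C i j * f (θbar t) (θbar t)) = c * f (θbar t) (θbar t) := by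
      rw [← Finset.sum_mul, hrow i]
    rw [this]
    exact hθbar t
  · intro t
    have key : F (θbar (t + T)) = F (θbar t + 2 * π) := by
      rw [hFshift]
      have := hconst (t + T) t
      linarith
    exact hFmono.injective key
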